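/- Let f(t) = 2^{-t}·ln Γ(t). Then ∫₀^∞ t·f(t) dt = 2·∫₀¹ (t+1)·f(t) dt - ((γ + ln ln 2)(1 + 2 ln 2) - 1)/(ln 2)². -/

import Mathlib

open Real MeasureTheory Set

lemma integral_exp_neg_log : ∫ t in Ioi (0:ℝ), Real.exp (-t) * Real.log t = -Real.eulerMascheroniConstant := by
  have h1 := Complex.hasDerivAt_GammaIntegral (s := 1) (by norm_num)
  have heq : (∫ t : ℝ in Ioi 0, (t:ℂ) ^ ((1:ℂ) - 1) * (Real.log t * Real.exp (-t)))
      = ((∫ t in Ioi (0:ℝ), Real.exp (-t) * Real.log t : ℝ) : ℂ) := by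
    rw [show ((∫ t in Ioi (0:ℝ), Real.exp (-t) * Real.log t : ℝ) : ℂ)
        = ∫ t in Ioi (0:ℝ), ((Real.exp (-t) * Real.log t : ℝ) : ℂ) from integral_ofReal.symm]
    refine setIntegral_congr_fun measurableSet_Ioi (fun t ht => ?_)
    simp [Complex.cpow_zero]
    push_cast
    ring
  rw [heq] at h1
  have h2 : HasDerivAt Complex.Gamma ((∫ t in Ioi (0:ℝ), Real.exp (-t) * Real.log t : ℝ) : ℂ) 1 := by
    apply h1.congr_of_eventuallyEq
    have hopen : IsOpen {s : ℂ | 0 < s.re} := isOpen_lt continuous_const Complex.continuous_re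
    filter_upwards [hopen.mem_nhds (by norm_num : (0:ℝ) < (1:ℂ).re)] with s hs
    exact Complex.Gamma_eq_integral hs
  have h3 : HasDerivAt Real.Gamma (∫ t in Ioi (0:ℝ), Real.exp (-t) * Real.log t) 1 := by
    have := h2.real_of_complex
    simpa [Complex.Gamma_ofReal] using this
  have := h3.unique Real.hasDerivAt_Gamma_one
  linarith [this]

lemma integral_mul_exp_neg_log : ∫ t in Ioi (0:ℝ), t * Real.exp (-t) * Real.log t
    = 1 - Real.eulerMascheroniConstant := by
  have h1 := Complex.hasDerivAt_GammaIntegral (s := 2) (by norm_num)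
  have heq : (∫ t : ℝ in Ioi 0, (t:ℂ) ^ ((2:ℂ) - 1) * (Real.log t * Real.exp (-t)))
      = ((∫ t in Ioi (0:ℝ), t * Real.exp (-t) * Real.log t : ℝ) : ℂ) := by
    rw [show ((∫ t in Ioi (0:ℝ), t * Real.exp (-t) * Real.log t : ℝ) : ℂ)
        = ∫ t in Ioi (0:ℝ), ((t * Real.exp (-t) * Real.log t : ℝ) : ℂ) from integral_ofReal.symm]
    refine setIntegral_congr_fun measurableSet_Ioi (fun t ht => ?_)
    norm_num [Complex.cpow_one]
    push_cast
    ring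
  rw [heq] at h1
  have h2 : HasDerivAt Complex.Gamma ((∫ t in Ioi (0:ℝ), t * Real.exp (-t) * Real.log t : ℝ) : ℂ) 2 := by
    apply h1.congr_of_eventuallyEq
    have hopen : IsOpen {s : ℂ | 0 < s.re} := isOpen_lt continuous_const Complex.continuous_re
    filter_upwards [hopen.mem_nhds (by norm_num : (0:ℝ) < (2:ℂ).re)] with s hs
    exact Complex.Gamma_eq_integral hs
  have h3 : HasDerivAt Real.Gamma (∫ t in Ioi (0:ℝ), t * Real.exp (-t) * Real.log t) 2 := by
    have := h2.real_of_complex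
    simpa [Complex.Gamma_ofReal] using this
  have h4 := Real.hasDerivAt_Gamma_nat 1
  norm_num [harmonic_succ] at h4
  have := h3.unique h4
  rw [this]
  ring

lemma mono_int {s : ℝ} (hs : -1 < s) :
    IntegrableOn (fun t : ℝ => t ^ s * Real.exp (-(Real.log 2 * t))) (Ioi 0) := by
  have h := integrableOn_rpow_mul_exp_neg_mul_rpow hs zero_lt_one (Real.log_pos one_lt_two)
  refine h.congr_fun (fun t ht => ?_) measurableSet_Ioi
  beta_reduce
  rw [Real.rpow_one]
  ring_nf

lemma abs_log_le {t : ℝ} (ht : 0 < t) : |Real.log t| ≤ 2 * t ^ (-(1:ℝ)/2) + t := by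
  rcases le_or_gt 1 t with h | h
  · rw [abs_of_nonneg (Real.log_nonneg h)]
    have h1 : Real.log t ≤ t - 1 := Real.log_le_sub_one_of_pos ht
    have h2 : (0:ℝ) ≤ 2 * t ^ (-(1:ℝ)/2) := by positivity
    linarith
  · rw [abs_of_nonpos (Real.log_nonpos ht.le h.le)]
    have h1 : Real.log (t ^ (-(1:ℝ)/2)) ≤ t ^ (-(1:ℝ)/2) - 1 := Real.log_le_sub_one_of_pos (by positivity)
    rw [Real.log_rpow ht] at h1
    nlinarith [ht.le]

lemma logGamma_add_two_nonneg {t : ℝ} (ht : 0 ≤ t) : 0 ≤ Real.log (Real.Gamma (t + 2)) := by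
  refine Real.log_nonneg ?_
  rcases eq_or_lt_of_le ht with h | h
  · simp [← h, Real.Gamma_two]
  · have := Real.Gamma_strictMonoOn_Ici (by norm_num : (2:ℝ) ∈ Ici 2)
      (by simpa using by linarith : t + 2 ∈ Ici (2:ℝ)) (by linarith)
    rw [Real.Gamma_two] at this
    exact this.le

lemma logGamma_add_two_le {t : ℝ} (ht : 0 ≤ t) :
    Real.log (Real.Gamma (t + 2)) ≤ (t + 3) * Real.log (t + 3) := by
  set n := ⌈t + 2⌉₊ with hn
  have hn1 : t + 2 ≤ n := Nat.le_ceil _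
  have hn2 : (n:ℝ) ≤ t + 3 := by
    have := Nat.ceil_lt_add_one (by linarith : (0:ℝ) ≤ t + 2)
    linarith
  have hΓ1 : Real.Gamma (t + 2) ≤ Real.Gamma ((n:ℝ) + 1) := by
    rcases eq_or_lt_of_le (by linarith : t + 2 ≤ (n:ℝ) + 1) with h | h
    · rw [h]
    · exact (Real.Gamma_strictMonoOn_Ici (by simpa using by linarith : t + 2 ∈ Ici (2:ℝ))
        (by simp only [mem_Ici]; linarith : ((n:ℝ) + 1) ∈ Ici (2:ℝ)) h).le
  have hΓ2 : Real.Gamma ((n:ℝ) + 1) = (Nat.factorial n : ℝ) := by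
    exact_mod_cast Real.Gamma_nat_eq_factorial n
  have hfac : (Nat.factorial n : ℝ) ≤ (n:ℝ) ^ (n:ℕ) := by
    exact_mod_cast Nat.factorial_le_pow n
  have hpow : (n:ℝ) ^ (n:ℕ) ≤ (t + 3) ^ ((t:ℝ) + 3) := by
    calc (n:ℝ) ^ (n:ℕ) ≤ (t+3) ^ (n:ℕ) := pow_le_pow_left₀ (by positivity) hn2 n
      _ = (t+3) ^ ((n:ℕ):ℝ) := (Real.rpow_natCast _ n).symm
      _ ≤ (t+3) ^ ((t:ℝ)+3) := Real.rpow_le_rpow_of_exponent_le (by linarith) hn2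
  have hpos : 0 < Real.Gamma (t + 2) := Real.Gamma_pos_of_pos (by linarith)
  calc Real.log (Real.Gamma (t + 2)) ≤ Real.log ((t+3) ^ ((t:ℝ)+3)) := by
        apply Real.log_le_log hpos
        calc Real.Gamma (t+2) ≤ _ := hΓ1
          _ = (Nat.factorial n : ℝ) := hΓ2
          _ ≤ (n:ℝ)^(n:ℕ) := hfac
          _ ≤ _ := hpow
    _ = (t+3) * Real.log (t+3) := Real.log_rpow (by linarith) _

lemma logGamma_eq {t : ℝ} (ht : 0 < t) :
    Real.log (Real.Gamma t) = Real.log (Real.Gamma (t + 2)) - Real.log t - Real.log (t + 1) := by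
  have h1 : Real.Gamma (t + 2) = (t+1) * (t * Real.Gamma t) := by
    rw [show t + 2 = (t + 1) + 1 by ring, Real.Gamma_add_one (by linarith),
      Real.Gamma_add_one ht.ne']
  rw [h1, Real.log_mul (by linarith) (by positivity), Real.log_mul ht.ne'
    (Real.Gamma_pos_of_pos ht).ne']
  ring

lemma abs_logGamma_le {t : ℝ} (ht : 0 < t) :
    |Real.log (Real.Gamma t)| ≤ (t+3)^2 + 2 * t ^ (-(1:ℝ)/2) + 2 * t := by
  rw [logGamma_eq ht]
  have h1 := logGamma_add_two_nonneg ht.le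
  have h4 : (t+3) * Real.log (t+3) ≤ (t+3)^2 := by
    nlinarith [Real.log_le_sub_one_of_pos (by linarith : (0:ℝ) < t + 3)]
  have h2 := logGamma_add_two_le ht.le
  have h5 := abs_log_le ht
  have h6 : 0 ≤ Real.log (t + 1) := Real.log_nonneg (by linarith)
  have h7 : Real.log (t + 1) ≤ t := by
    have := Real.log_le_sub_one_of_pos (by linarith : (0:ℝ) < t + 1); linarith
  rw [abs_le] at h5 ⊢
  constructor <;> nlinarith [h5.1, h5.2, Real.rpow_nonneg ht.le (-(1:ℝ)/2)]

lemma contOn_logGamma : ContinuousOn (fun t : ℝ => Real.log (Real.Gamma t)) (Ioi 0) := by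
  intro t ht
  have ht' : (0:ℝ) < t := ht
  have hd : ContinuousAt Real.Gamma t :=
    (Real.differentiableAt_Gamma
      (fun m => (lt_of_le_of_lt (neg_nonpos.mpr m.cast_nonneg) ht').ne')).continuousAt
  exact ((Real.continuousAt_log (Real.Gamma_pos_of_pos ht').ne').comp hd).continuousWithinAt

lemma rpow_key {t : ℝ} (ht : 0 < t) (j : ℕ) :
    t ^ (j:ℕ) * ((t+3)^2 + 2 * t ^ (-(1:ℝ)/2) + 2*t)
      = t ^ ((j:ℝ)+2) + 8 * t ^ ((j:ℝ)+1) + 9 * t ^ ((j:ℝ)) + 2 * t ^ ((j:ℝ)-1/2) := by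
  have hj : t ^ ((j:ℝ)) = t ^ (j:ℕ) := Real.rpow_natCast t j
  have h2 : t ^ ((j:ℝ)+2) = t^((j:ℝ)) * t^(2:ℝ) := Real.rpow_add ht _ _
  have h1 : t ^ ((j:ℝ)+1) = t^((j:ℝ)) * t^(1:ℝ) := Real.rpow_add ht _ _
  have hh : t ^ ((j:ℝ)-1/2) = t^((j:ℝ)) * t^(-(1:ℝ)/2) := by
    rw [show (j:ℝ)-1/2 = (j:ℝ) + (-(1:ℝ)/2) by ring, Real.rpow_add ht]
  have h2' : t ^ (2:ℝ) = t^(2:ℕ) := by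
    rw [show (2:ℝ) = ((2:ℕ):ℝ) by norm_num, Real.rpow_natCast]
  rw [h2, h1, hh, hj, h2', Real.rpow_one]
  ring

lemma int_main (j : ℕ) : IntegrableOn
    (fun t : ℝ => t ^ j * (Real.exp (-(Real.log 2 * t)) * Real.log (Real.Gamma t))) (Ioi 0) := by
  have hb : IntegrableOn (fun t : ℝ =>
      (t ^ ((j:ℝ)+2) + 8 * t ^ ((j:ℝ)+1) + 9 * t ^ ((j:ℝ)) + 2 * t ^ ((j:ℝ)-1/2))
        * Real.exp (-(Real.log 2 * t))) (Ioi 0) := by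
    have h1 := mono_int (s := (j:ℝ)+2) (by have := Nat.cast_nonneg (α:=ℝ) j; linarith)
    have h2 := (mono_int (s := (j:ℝ)+1) (by have := Nat.cast_nonneg (α:=ℝ) j; linarith)).const_mul (8:ℝ)
    have h3 := (mono_int (s := (j:ℝ)) (by have := Nat.cast_nonneg (α:=ℝ) j; linarith)).const_mul (9:ℝ)
    have h4 := (mono_int (s := (j:ℝ)-1/2) (by
      have : (0:ℝ) ≤ (j:ℝ) := Nat.cast_nonneg j
      linarith)).const_mul (2:ℝ)
    refine IntegrableOn.congr_fun (((h1.add h2).add h3).add h4) (fun t ht => ?_) measurableSet_Ioi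
    simp only [Pi.add_apply]
    ring
  have hmeas : ContinuousOn
      (fun t : ℝ => t ^ j * (Real.exp (-(Real.log 2 * t)) * Real.log (Real.Gamma t))) (Ioi 0) :=
    (continuousOn_pow j).mul
      (((Real.continuous_exp.comp (by continuity)).continuousOn).mul contOn_logGamma)
  refine hb.mono' (hmeas.aestronglyMeasurable measurableSet_Ioi) ?_
  filter_upwards [ae_restrict_mem measurableSet_Ioi] with t ht
  have ht' : (0:ℝ) < t := ht
  have habs := abs_logGamma_le ht'
  have hexp : (0:ℝ) < Real.exp (-(Real.log 2 * t)) := Real.exp_pos _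
  rw [Real.norm_eq_abs, abs_mul, abs_mul, abs_of_pos hexp, abs_of_pos (pow_pos ht' j)]
  have h := mul_le_mul_of_nonneg_left habs (le_of_lt (pow_pos ht' j))
  calc t^j * (Real.exp (-(Real.log 2 * t)) * |Real.log (Real.Gamma t)|)
      = (t^j * |Real.log (Real.Gamma t)|) * Real.exp (-(Real.log 2 * t)) := by ring
    _ ≤ (t^j * ((t+3)^2 + 2 * t ^ (-(1:ℝ)/2) + 2*t)) * Real.exp (-(Real.log 2 * t)) :=
        mul_le_mul_of_nonneg_right h hexp.le
    _ = _ := by rw [rpow_key ht' j]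

lemma int_log (j : ℕ) : IntegrableOn
    (fun t : ℝ => t ^ j * (Real.exp (-(Real.log 2 * t)) * Real.log t)) (Ioi 0) := by
  have hb : IntegrableOn (fun t : ℝ =>
      (2 * t ^ ((j:ℝ)-1/2) + t ^ ((j:ℝ)+1)) * Real.exp (-(Real.log 2 * t))) (Ioi 0) := by
    have h1 := (mono_int (s := (j:ℝ)-1/2) (by
      have : (0:ℝ) ≤ (j:ℝ) := Nat.cast_nonneg j
      linarith)).const_mul (2:ℝ)
    have h2 := mono_int (s := (j:ℝ)+1) (by have := Nat.cast_nonneg (α:=ℝ) j; linarith)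
    refine IntegrableOn.congr_fun (h1.add h2) (fun t ht => ?_) measurableSet_Ioi
    simp only [Pi.add_apply]
    ring
  have hmeas : ContinuousOn
      (fun t : ℝ => t ^ j * (Real.exp (-(Real.log 2 * t)) * Real.log t)) (Ioi 0) :=
    (continuousOn_pow j).mul
      (((Real.continuous_exp.comp (by continuity)).continuousOn).mul
        (Real.continuousOn_log.mono (fun t ht => ne_of_gt ht)))
  refine hb.mono' (hmeas.aestronglyMeasurable measurableSet_Ioi) ?_
  filter_upwards [ae_restrict_mem measurableSet_Ioi] with t ht
  have ht' : (0:ℝ) < t := ht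
  have habs := abs_log_le ht'
  have hexp : (0:ℝ) < Real.exp (-(Real.log 2 * t)) := Real.exp_pos _
  rw [Real.norm_eq_abs, abs_mul, abs_mul, abs_of_pos hexp, abs_of_pos (pow_pos ht' j)]
  have h := mul_le_mul_of_nonneg_left habs (le_of_lt (pow_pos ht' j))
  have key : t ^ j * (2 * t ^ (-(1:ℝ)/2) + t)
      = 2 * t ^ ((j:ℝ)-1/2) + t ^ ((j:ℝ)+1) := by
    have hj : t ^ ((j:ℝ)) = t ^ (j:ℕ) := Real.rpow_natCast t j
    have h1 : t ^ ((j:ℝ)+1) = t^((j:ℝ)) * t^(1:ℝ) := Real.rpow_add ht' _ _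
    have hh : t ^ ((j:ℝ)-1/2) = t^((j:ℝ)) * t^(-(1:ℝ)/2) := by
      rw [show (j:ℝ)-1/2 = (j:ℝ) + (-(1:ℝ)/2) by ring, Real.rpow_add ht']
    rw [h1, hh, hj, Real.rpow_one]; ring
  calc t^j * (Real.exp (-(Real.log 2 * t)) * |Real.log t|)
      = (t^j * |Real.log t|) * Real.exp (-(Real.log 2 * t)) := by ring
    _ ≤ (t^j * (2 * t ^ (-(1:ℝ)/2) + t)) * Real.exp (-(Real.log 2 * t)) :=
        mul_le_mul_of_nonneg_right h hexp.le
    _ = _ := by rw [key]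

lemma int_exp : IntegrableOn (fun t : ℝ => Real.exp (-(Real.log 2 * t))) (Ioi 0) := by
  have h := mono_int (s := 0) (by norm_num)
  refine IntegrableOn.congr_fun h (fun t ht => ?_) measurableSet_Ioi
  simp

lemma int_texp : IntegrableOn (fun t : ℝ => t * Real.exp (-(Real.log 2 * t))) (Ioi 0) := by
  have h := mono_int (s := 1) (by norm_num)
  refine IntegrableOn.congr_fun h (fun t ht => ?_) measurableSet_Ioi
  simp [Real.rpow_one]

lemma int_log0 : IntegrableOn (fun t : ℝ => Real.exp (-(Real.log 2 * t)) * Real.log t) (Ioi 0) := by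
  have := int_log 0; simpa using this

lemma int_log1 : IntegrableOn (fun t : ℝ => t * (Real.exp (-(Real.log 2 * t)) * Real.log t)) (Ioi 0) := by
  have := int_log 1; simpa using this

lemma q1 : ∫ t in Ioi (0:ℝ), Real.exp (-(Real.log 2 * t)) = 1 / Real.log 2 := by
  have hc : 0 < Real.log 2 := Real.log_pos one_lt_two
  have h := Real.integral_rpow_mul_exp_neg_mul_Ioi (a:=1) one_pos hc
  simpa using h

lemma q2 : ∫ t in Ioi (0:ℝ), t * Real.exp (-(Real.log 2 * t)) = 1 / (Real.log 2)^2 := by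
  have hc : 0 < Real.log 2 := Real.log_pos one_lt_two
  have h := Real.integral_rpow_mul_exp_neg_mul_Ioi (a:=2) two_pos hc
  have h2 : ((1:ℝ)/Real.log 2) ^ (2:ℝ) = 1/(Real.log 2)^2 := by
    rw [show (2:ℝ) = ((2:ℕ):ℝ) by norm_num, Real.rpow_natCast]; norm_num
  rw [Real.Gamma_two, mul_one, h2] at h
  rw [← h]
  refine setIntegral_congr_fun measurableSet_Ioi (fun t ht => ?_)
  norm_num [Real.rpow_one]

lemma q3 : ∫ t in Ioi (0:ℝ), Real.exp (-(Real.log 2 * t)) * Real.log t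
    = -(Real.eulerMascheroniConstant + Real.log (Real.log 2)) / Real.log 2 := by
  have hc : 0 < Real.log 2 := Real.log_pos one_lt_two
  have h := integral_comp_mul_left_Ioi (fun u : ℝ => Real.exp (-u) * Real.log u) 0 hc
  simp only [mul_zero, smul_eq_mul] at h
  rw [integral_exp_neg_log] at h
  have hsplit : (∫ x in Ioi (0:ℝ), Real.exp (-(Real.log 2 * x)) * Real.log (Real.log 2 * x))
      = Real.log (Real.log 2) * (∫ x in Ioi (0:ℝ), Real.exp (-(Real.log 2 * x)))
        + ∫ x in Ioi (0:ℝ), Real.exp (-(Real.log 2 * x)) * Real.log x := by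
    rw [← integral_const_mul, ← integral_add (int_exp.const_mul _) int_log0]
    refine setIntegral_congr_fun measurableSet_Ioi (fun x hx => ?_)
    rw [Real.log_mul hc.ne' (ne_of_gt hx)]
    ring
  rw [q1] at hsplit
  rw [show (fun x : ℝ => Real.exp (-(Real.log 2 * x)) * Real.log (Real.log 2 * x))
    = (fun x : ℝ => (fun u : ℝ => Real.exp (-u) * Real.log u) (Real.log 2 * x)) from rfl] at hsplit
  rw [h] at hsplit
  have hT : (∫ x in Ioi (0:ℝ), Real.exp (-(Real.log 2 * x)) * Real.log x)
      = (Real.log 2)⁻¹ * (-Real.eulerMascheroniConstant)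
        - Real.log (Real.log 2) * (1 / Real.log 2) := by linarith
  rw [hT]
  field_simp
  ring

lemma q4 : ∫ t in Ioi (0:ℝ), t * (Real.exp (-(Real.log 2 * t)) * Real.log t)
    = (1 - Real.eulerMascheroniConstant - Real.log (Real.log 2)) / (Real.log 2)^2 := by
  have hc : 0 < Real.log 2 := Real.log_pos one_lt_two
  have h := integral_comp_mul_left_Ioi (fun u : ℝ => u * Real.exp (-u) * Real.log u) 0 hc
  simp only [mul_zero, smul_eq_mul] at h
  rw [integral_mul_exp_neg_log] at h
  have hsplit : (∫ x in Ioi (0:ℝ), (Real.log 2 * x) * Real.exp (-(Real.log 2 * x)) * Real.log (Real.log 2 * x))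
      = Real.log 2 * (Real.log (Real.log 2) * (∫ x in Ioi (0:ℝ), x * Real.exp (-(Real.log 2 * x)))
        + ∫ x in Ioi (0:ℝ), x * (Real.exp (-(Real.log 2 * x)) * Real.log x)) := by
    rw [← integral_const_mul, ← integral_add (int_texp.const_mul _) int_log1, ← integral_const_mul]
    refine setIntegral_congr_fun measurableSet_Ioi (fun x hx => ?_)
    rw [Real.log_mul hc.ne' (ne_of_gt hx)]
    ring
  rw [q2] at hsplit
  rw [show (fun x : ℝ => (Real.log 2 * x) * Real.exp (-(Real.log 2 * x)) * Real.log (Real.log 2 * x))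
    = (fun x : ℝ => (fun u : ℝ => u * Real.exp (-u) * Real.log u) (Real.log 2 * x)) from rfl] at hsplit
  rw [h] at hsplit
  have h2 : Real.log 2 ≠ 0 := hc.ne'
  have key : Real.log (Real.log 2) * (1/(Real.log 2)^2)
      + (∫ x in Ioi (0:ℝ), x * (Real.exp (-(Real.log 2 * x)) * Real.log x))
      = (1 - Real.eulerMascheroniConstant)/(Real.log 2)^2 := by
    apply mul_left_cancel₀ h2
    rw [← hsplit]
    field_simp
  have : (∫ x in Ioi (0:ℝ), x * (Real.exp (-(Real.log 2 * x)) * Real.log x))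
      = (1 - Real.eulerMascheroniConstant)/(Real.log 2)^2
        - Real.log (Real.log 2) * (1/(Real.log 2)^2) := by linarith
  rw [this]
  field_simp

lemma int_g : IntegrableOn (fun t : ℝ => Real.exp (-(Real.log 2 * t)) * Real.log (Real.Gamma t)) (Ioi 0) := by
  have := int_main 0; simpa using this

lemma int_tg : IntegrableOn (fun t : ℝ => t * (Real.exp (-(Real.log 2 * t)) * Real.log (Real.Gamma t))) (Ioi 0) := by
  have := int_main 1; simpa using this



lemma shift (f : ℝ → ℝ) : ∫ x in Ioi (1:ℝ), f x = ∫ x in Ioi (0:ℝ), f (x+1) := by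
  have h := (measurePreserving_add_right volume (1:ℝ)).setIntegral_preimage_emb
    (measurableEmbedding_addRight 1) f (Ioi 1)
  have hpre : (· + (1:ℝ)) ⁻¹' (Ioi 1) = Ioi 0 := by
    ext x; simp [lt_add_iff_pos_left]
  rw [hpre] at h
  exact h.symm

lemma g_rec {x : ℝ} (hx : 0 < x) :
    Real.exp (-(Real.log 2 * (x+1))) * Real.log (Real.Gamma (x+1))
      = 2⁻¹ * (Real.exp (-(Real.log 2 * x)) * Real.log (Real.Gamma x) + (Real.exp (-(Real.log 2 * x)) * Real.log x)) := by
  have h2 : Real.exp (-Real.log 2) = 2⁻¹ := by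
    rw [Real.exp_neg, Real.exp_log two_pos]
  rw [Real.Gamma_add_one hx.ne', Real.log_mul hx.ne' (Real.Gamma_pos_of_pos hx).ne',
    show -(Real.log 2 * (x+1)) = -(Real.log 2 * x) + -(Real.log 2) by ring, Real.exp_add, h2]
  ring

theorem espinosa_identity_two :
    ∫ t in Set.Ioi (0:ℝ), t * ((2:ℝ) ^ (-t) * Real.log (Real.Gamma t))
      = 2 * (∫ t in (0:ℝ)..1, (t + 1) * ((2:ℝ) ^ (-t) * Real.log (Real.Gamma t)))
        - ((Real.eulerMascheroniConstant + Real.log (Real.log 2)) * (1 + 2 * Real.log 2) - 1)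
            / (Real.log 2) ^ 2 := by
  have hw : ∀ t : ℝ, (2:ℝ) ^ (-t) = Real.exp (-(Real.log 2 * t)) := by
    intro t
    rw [Real.rpow_def_of_pos two_pos]
    ring_nf
  have hc : 0 < Real.log 2 := Real.log_pos one_lt_two
  set I := ∫ t in Ioi (0:ℝ), t * (Real.exp (-(Real.log 2 * t)) * Real.log (Real.Gamma t)) with hI
  set K := ∫ t in Ioi (0:ℝ), Real.exp (-(Real.log 2 * t)) * Real.log (Real.Gamma t) with hK
  set J₁ := ∫ t in Ioc (0:ℝ) 1, t * (Real.exp (-(Real.log 2 * t)) * Real.log (Real.Gamma t)) with hJ₁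
  set J₂ := ∫ t in Ioc (0:ℝ) 1, Real.exp (-(Real.log 2 * t)) * Real.log (Real.Gamma t) with hJ₂
  set T := ∫ t in Ioi (0:ℝ), t * (Real.exp (-(Real.log 2 * t)) * Real.log t) with hT
  set D := ∫ t in Ioi (0:ℝ), Real.exp (-(Real.log 2 * t)) * Real.log t with hD
  have hLHS : (∫ t in Set.Ioi (0:ℝ), t * ((2:ℝ) ^ (-t) * Real.log (Real.Gamma t))) = I := by
    rw [hI]
    refine setIntegral_congr_fun measurableSet_Ioi (fun t ht => ?_)
    rw [hw]
  have hinterval : (∫ t in (0:ℝ)..1, (t + 1) * ((2:ℝ) ^ (-t) * Real.log (Real.Gamma t)))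
      = J₁ + J₂ := by
    rw [intervalIntegral.integral_of_le zero_le_one]
    have h1 : (∫ t in Ioc (0:ℝ) 1, (t + 1) * ((2:ℝ) ^ (-t) * Real.log (Real.Gamma t)))
        = ∫ t in Ioc (0:ℝ) 1, (t * (Real.exp (-(Real.log 2 * t)) * Real.log (Real.Gamma t)) + (Real.exp (-(Real.log 2 * t)) * Real.log (Real.Gamma t))) := by
      refine setIntegral_congr_fun measurableSet_Ioc (fun t ht => ?_)
      rw [hw]
      ring
    rw [h1, integral_add (int_tg.mono_set Ioc_subset_Ioi_self)
      (int_g.mono_set Ioc_subset_Ioi_self), hJ₁, hJ₂]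
  have hIsplit : I = J₁ + ∫ t in Ioi (1:ℝ), t * (Real.exp (-(Real.log 2 * t)) * Real.log (Real.Gamma t)) := by
    rw [hI, hJ₁, ← Set.Ioc_union_Ioi_eq_Ioi (zero_le_one (α := ℝ)),
      setIntegral_union (Set.Ioc_disjoint_Ioi le_rfl) measurableSet_Ioi
        (int_tg.mono_set Ioc_subset_Ioi_self)
        (int_tg.mono_set (Ioi_subset_Ioi zero_le_one))]
  have hKsplit : K = J₂ + ∫ t in Ioi (1:ℝ), Real.exp (-(Real.log 2 * t)) * Real.log (Real.Gamma t) := by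
    rw [hK, hJ₂, ← Set.Ioc_union_Ioi_eq_Ioi (zero_le_one (α := ℝ)),
      setIntegral_union (Set.Ioc_disjoint_Ioi le_rfl) measurableSet_Ioi
        (int_g.mono_set Ioc_subset_Ioi_self)
        (int_g.mono_set (Ioi_subset_Ioi zero_le_one))]
  have h12 : Integrable (fun x : ℝ => x * (Real.exp (-(Real.log 2 * x)) * Real.log (Real.Gamma x)) + (Real.exp (-(Real.log 2 * x)) * Real.log (Real.Gamma x))) (volume.restrict (Ioi 0)) :=
    int_tg.add int_g
  have h34 : Integrable (fun x : ℝ => x * (Real.exp (-(Real.log 2 * x)) * Real.log x) + (Real.exp (-(Real.log 2 * x)) * Real.log x)) (volume.restrict (Ioi 0)) :=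
    int_log1.add int_log0
  have htail1 : (∫ t in Ioi (1:ℝ), t * (Real.exp (-(Real.log 2 * t)) * Real.log (Real.Gamma t))) = 2⁻¹ * (I + K + T + D) := by
    rw [shift (fun t => t * (Real.exp (-(Real.log 2 * t)) * Real.log (Real.Gamma t)))]
    have h1 : (∫ x in Ioi (0:ℝ), (x+1) * (Real.exp (-(Real.log 2 * (x+1))) * Real.log (Real.Gamma (x+1))))
        = ∫ x in Ioi (0:ℝ), 2⁻¹ * ((x * (Real.exp (-(Real.log 2 * x)) * Real.log (Real.Gamma x)) + (Real.exp (-(Real.log 2 * x)) * Real.log (Real.Gamma x)))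
            + (x * (Real.exp (-(Real.log 2 * x)) * Real.log x) + (Real.exp (-(Real.log 2 * x)) * Real.log x))) := by
      refine setIntegral_congr_fun measurableSet_Ioi (fun x hx => ?_)
      rw [g_rec hx]
      ring
    rw [h1, integral_const_mul, integral_add h12 h34, integral_add int_tg int_g,
      integral_add int_log1 int_log0, hI, hK, hT, hD]
    ring
  have htail2 : (∫ t in Ioi (1:ℝ), Real.exp (-(Real.log 2 * t)) * Real.log (Real.Gamma t)) = 2⁻¹ * (K + D) := by
    rw [shift (fun t => Real.exp (-(Real.log 2 * t)) * Real.log (Real.Gamma t))]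
    have h1 : (∫ x in Ioi (0:ℝ), Real.exp (-(Real.log 2 * (x+1))) * Real.log (Real.Gamma (x+1)))
        = ∫ x in Ioi (0:ℝ), 2⁻¹ * (Real.exp (-(Real.log 2 * x)) * Real.log (Real.Gamma x) + (Real.exp (-(Real.log 2 * x)) * Real.log x)) := by
      refine setIntegral_congr_fun measurableSet_Ioi (fun x hx => ?_)
      rw [g_rec hx]
    rw [h1, integral_const_mul, integral_add int_g int_log0, hK, hD]
  have hKval : K = 2 * J₂ + D := by
    rw [htail2] at hKsplit; linarith
  have hIval : I = 2 * J₁ + 2 * J₂ + 2 * D + T := by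
    rw [htail1] at hIsplit; linarith
  have hDval : D = -(Real.eulerMascheroniConstant + Real.log (Real.log 2)) / Real.log 2 := q3
  have hTval : T = (1 - Real.eulerMascheroniConstant - Real.log (Real.log 2)) / (Real.log 2)^2 := q4
  rw [hLHS, hinterval, hIval, hDval, hTval]
  have hc0 : Real.log 2 ≠ 0 := hc.ne'
  field_simp
  ring
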